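/- arXiv:2302.00742 — 3 statements merged into one kernel-verified Lean document; each statement's English description precedes it below -/
import Mathlib

section
/- Let P = (u, …, v) and Q be vertex-disjoint paths in a finite simple graph G such that no endpoint of Q is adjacent to an endpoint of P (i.e., d(P, Q) = 0). Then the number of edges of Q admitting an elementary merge of P into Q is at least d_Q(u) + d_Q(v) − |V(Q)| + 1. -/
/-- `dOn G Q x` is the number of neighbors of `x` in `G` that lie on the walk `Q`. -/
def dOn {V : Type*} [DecidableEq V] (G : SimpleGraph V) [DecidableRel G.Adj]
    {a b : V} (Q : G.Walk a b) (x : V) : ℕ :=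
  (Q.support.toFinset.filter (fun y => G.Adj x y)).card

/-- The number of edges `{qᵢ, qᵢ₊₁}` of `Q` that admit an elementary merge of a path with
endpoints `u` and `v` into `Q`, i.e. such that (`u` is adjacent to `qᵢ` and `v` to `qᵢ₊₁`)
or (`u` is adjacent to `qᵢ₊₁` and `v` to `qᵢ`). -/
def mergeCount {V : Type*} (G : SimpleGraph V) [DecidableRel G.Adj] (u v : V)
    {a b : V} (Q : G.Walk a b) : ℕ :=
  ((Finset.range Q.length).filter (fun i =>
    (G.Adj u (Q.getVert i) ∧ G.Adj v (Q.getVert (i + 1))) ∨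
    (G.Adj u (Q.getVert (i + 1)) ∧ G.Adj v (Q.getVert i)))).card

private lemma supp_eq_map {V : Type*} {G : SimpleGraph V} :
    ∀ {a b : V} (p : G.Walk a b),
      p.support = (List.range (p.length + 1)).map p.getVert
  | _, _, .nil => by rfl
  | _, _, .cons h q => by
    rw [SimpleGraph.Walk.support_cons, supp_eq_map q, SimpleGraph.Walk.length_cons]
    conv_rhs => rw [List.range_succ_eq_map, List.map_cons, List.map_map]
    have hf : (SimpleGraph.Walk.cons h q).getVert ∘ Nat.succ = q.getVert := by
      funext i
      exact SimpleGraph.Walk.getVert_cons_succ q h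
    rw [hf, SimpleGraph.Walk.getVert_zero]

/-- If `P = (u, …, v)` and `Q = (a, …, b)` are vertex-disjoint paths and no endpoint of `Q`
is adjacent to an endpoint of `P`, then the number of edges of `Q` admitting an elementary
merge of `P` into `Q` is at least `d_Q(u) + d_Q(v) − |V(Q)| + 1`. -/
theorem stmt2 {V : Type*} [DecidableEq V] (G : SimpleGraph V) [DecidableRel G.Adj]
    {u v a b : V} (P : G.Walk u v) (Q : G.Walk a b)
    (hP : P.IsPath) (hQ : Q.IsPath)
    (hdisj : ∀ x ∈ P.support, x ∉ Q.support)
    (hau : ¬ G.Adj a u) (hav : ¬ G.Adj a v) (hbu : ¬ G.Adj b u) (hbv : ¬ G.Adj b v) :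
    (dOn G Q u : ℤ) + (dOn G Q v : ℤ) - (Q.support.toFinset.card : ℤ) + 1
      ≤ (mergeCount G u v Q : ℤ) := by
  classical
  set m := Q.length with hm
  -- injectivity of getVert on indices
  have hnodup : Q.support.Nodup := hQ.support_nodup
  rw [supp_eq_map Q] at hnodup
  have hinj : ∀ i ∈ Finset.range (m + 1), ∀ j ∈ Finset.range (m + 1),
      Q.getVert i = Q.getVert j → i = j := by
    intro i hi j hj hij
    exact List.inj_on_of_nodup_map hnodup
      (List.mem_range.mpr (Finset.mem_range.mp hi))
      (List.mem_range.mpr (Finset.mem_range.mp hj)) hij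
  -- support toFinset as image
  have h1 : Q.support.toFinset = (Finset.range (m + 1)).image Q.getVert := by
    ext x
    simp only [List.mem_toFinset, SimpleGraph.Walk.mem_support_iff_exists_getVert,
      Finset.mem_image, Finset.mem_range]
    constructor
    · rintro ⟨n, hn, hle⟩; exact ⟨n, by omega, hn⟩
    · rintro ⟨n, hn, hx⟩; exact ⟨n, hx, by omega⟩
  have hcard : Q.support.toFinset.card = m + 1 := by
    rw [h1, Finset.card_image_of_injOn (fun i hi j hj => hinj i hi j hj), Finset.card_range]
  -- dOn as index counting
  have hdOn : ∀ w : V, dOn G Q w =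
      ((Finset.range (m + 1)).filter (fun j => G.Adj w (Q.getVert j))).card := by
    intro w
    rw [dOn, h1, Finset.filter_image, Finset.card_image_of_injOn]
    intro i hi j hj hij
    exact hinj i (Finset.filter_subset _ _ hi) j (Finset.filter_subset _ _ hj) hij
  set Au := (Finset.range (m + 1)).filter (fun j => G.Adj u (Q.getVert j)) with hAu
  set Av := (Finset.range (m + 1)).filter (fun j => G.Adj v (Q.getVert j)) with hAv
  set Fu := (Finset.range m).filter (fun i => G.Adj u (Q.getVert i)) with hFu
  set Fv := (Finset.range m).filter (fun i => G.Adj v (Q.getVert (i + 1))) with hFv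
  -- u is not adjacent to q_m = b
  have hgm : Q.getVert m = b := Q.getVert_length
  have hg0 : Q.getVert 0 = a := Q.getVert_zero
  have hAuFu : Au = Fu := by
    ext j
    simp only [hAu, hFu, Finset.mem_filter, Finset.mem_range]
    constructor
    · rintro ⟨hj, hadj⟩
      refine ⟨?_, hadj⟩
      rcases Nat.lt_succ_iff_lt_or_eq.mp hj with h | rfl
      · exact h
      · exact absurd (hgm ▸ hadj).symm hbu
    · rintro ⟨hj, hadj⟩; exact ⟨by omega, hadj⟩
  have hAvFv : Av.card = Fv.card := by
    have himg : Av = Fv.image (· + 1) := by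
      ext j
      simp only [hAv, hFv, Finset.mem_image, Finset.mem_filter, Finset.mem_range]
      constructor
      · rintro ⟨hjr, hadj⟩
        have hj0 : j ≠ 0 := by
          rintro rfl
          exact hav (hg0 ▸ hadj).symm
        exact ⟨j - 1, ⟨by omega, by rwa [Nat.sub_add_cancel (by omega)]⟩, by omega⟩
      · rintro ⟨i, ⟨hir, hadj⟩, rfl⟩
        exact ⟨by omega, hadj⟩
    rw [himg, Finset.card_image_of_injective _ (fun x y h => by omega)]
  -- inclusion-exclusion
  have hunion : (Fu ∪ Fv).card ≤ m := by
    calc (Fu ∪ Fv).card ≤ (Finset.range m).card := by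
          apply Finset.card_le_card
          exact Finset.union_subset (Finset.filter_subset _ _) (Finset.filter_subset _ _)
      _ = m := Finset.card_range m
  have hie : (Fu ∩ Fv).card + (Fu ∪ Fv).card = Fu.card + Fv.card :=
    Finset.card_inter_add_card_union Fu Fv
  -- the intersection is a subset of the merge set
  have hinter : Fu ∩ Fv =
      (Finset.range m).filter (fun i => G.Adj u (Q.getVert i) ∧ G.Adj v (Q.getVert (i + 1))) := by
    rw [hFu, hFv, Finset.filter_and]
  have hsub : (Fu ∩ Fv).card ≤ mergeCount G u v Q := by
    rw [mergeCount]
    apply Finset.card_le_card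
    rw [hinter]
    intro i hi
    simp only [Finset.mem_filter, Finset.mem_range] at hi ⊢
    exact ⟨hi.1, Or.inl hi.2⟩
  have h1' : dOn G Q u = Fu.card := by rw [hdOn u, ← hAu, hAuFu]
  have h2' : dOn G Q v = Fv.card := by rw [hdOn v, ← hAv, hAvFv]
  rw [h1', h2', hcard]
  have := hie
  omega
end

section
/- Let P = (u, …, v) and Q be vertex-disjoint paths in a finite simple graph G, each having at least 2 vertices. Then M(P, Q) ≥ d_Q(u) + d_Q(v) − |V(Q)| + 1. -/
/-- `d(P, Q)`: the number of endpoints of `Q` (a walk from `a` to `b`) that are adjacent to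
some endpoint of a path with endpoints `u` and `v`. -/
def dEnds {V : Type*} [DecidableEq V] (G : SimpleGraph V) [DecidableRel G.Adj]
    (u v a b : V) : ℕ :=
  (({a, b} : Finset V).filter (fun x => G.Adj x u ∨ G.Adj x v)).card

/-- `M(P, Q)`: the number of edges of `Q` admitting an elementary merge of `P` into `Q`,
plus `d(P, Q)`. -/
def MPQ {V : Type*} [DecidableEq V] (G : SimpleGraph V) [DecidableRel G.Adj] (u v : V)
    {a b : V} (Q : G.Walk a b) : ℕ :=
  mergeCount G u v Q + dEnds G u v a b

lemma dOn_le {V : Type*} [DecidableEq V] (G : SimpleGraph V) [DecidableRel G.Adj]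
    {a b : V} (Q : G.Walk a b) (x : V) :
    dOn G Q x ≤ ((Finset.range (Q.length + 1)).filter
      (fun i => G.Adj x (Q.getVert i))).card := by
  apply Finset.card_le_card_of_surjOn Q.getVert
  intro y hy
  simp only [Finset.coe_filter, Set.mem_setOf_eq, Finset.mem_coe, List.mem_toFinset] at hy
  obtain ⟨hy1, hy2⟩ := hy
  obtain ⟨n, hn, hle⟩ := SimpleGraph.Walk.mem_support_iff_exists_getVert.mp hy1
  refine ⟨n, ?_, hn⟩
  simp only [Finset.coe_filter, Set.mem_setOf_eq, Finset.mem_range, Finset.mem_coe]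
  exact ⟨Nat.lt_succ_of_le hle, hn ▸ hy2⟩

/-- If `P = (u, …, v)` and `Q = (a, …, b)` are vertex-disjoint paths, each with at least two
vertices, then `M(P, Q) ≥ d_Q(u) + d_Q(v) − |V(Q)| + 1`. -/
theorem stmt3 {V : Type*} [DecidableEq V] (G : SimpleGraph V) [DecidableRel G.Adj]
    {u v a b : V} (P : G.Walk u v) (Q : G.Walk a b)
    (hP : P.IsPath) (hQ : Q.IsPath)
    (hPlen : 2 ≤ P.support.toFinset.card) (hQlen : 2 ≤ Q.support.toFinset.card)
    (hdisj : ∀ x ∈ P.support, x ∉ Q.support) :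
    (dOn G Q u : ℤ) + (dOn G Q v : ℤ) - (Q.support.toFinset.card : ℤ) + 1
      ≤ (MPQ G u v Q : ℤ) := by
  set n := Q.length with hn
  -- card of support
  have hcard : Q.support.toFinset.card = n + 1 := by
    rw [List.toFinset_card_of_nodup hQ.support_nodup, SimpleGraph.Walk.length_support]
  have hab : a ≠ b := by
    intro h
    subst h
    rw [SimpleGraph.Walk.isPath_iff_eq_nil.mp hQ] at hQlen
    simp at hQlen
  -- indicator sums
  have hdOnu : dOn G Q u ≤ ∑ i ∈ Finset.range (n + 1),
      (if G.Adj u (Q.getVert i) then 1 else 0) := by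
    rw [← Finset.card_filter]; exact dOn_le G Q u
  have hdOnv : dOn G Q v ≤ ∑ i ∈ Finset.range (n + 1),
      (if G.Adj v (Q.getVert i) then 1 else 0) := by
    rw [← Finset.card_filter]; exact dOn_le G Q v
  have hmerge : mergeCount G u v Q = ∑ i ∈ Finset.range n,
      (if (G.Adj u (Q.getVert i) ∧ G.Adj v (Q.getVert (i + 1))) ∨
          (G.Adj u (Q.getVert (i + 1)) ∧ G.Adj v (Q.getVert i)) then 1 else 0) := by
    rw [mergeCount, Finset.card_filter]
  have hdEnds : dEnds G u v a b =
      (if G.Adj a u ∨ G.Adj a v then 1 else 0) +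
      (if G.Adj b u ∨ G.Adj b v then 1 else 0) := by
    rw [dEnds, Finset.card_filter, Finset.sum_pair hab]
  -- pointwise bound and summation
  have key : ∑ i ∈ Finset.range n, (if G.Adj u (Q.getVert i) then 1 else 0) +
      ∑ i ∈ Finset.range n, (if G.Adj v (Q.getVert (i + 1)) then 1 else 0)
      ≤ n + mergeCount G u v Q := by
    rw [hmerge, ← Finset.sum_add_distrib]
    calc ∑ i ∈ Finset.range n, ((if G.Adj u (Q.getVert i) then 1 else 0) +
          (if G.Adj v (Q.getVert (i + 1)) then 1 else 0))
        ≤ ∑ i ∈ Finset.range n, (1 +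
          (if (G.Adj u (Q.getVert i) ∧ G.Adj v (Q.getVert (i + 1))) ∨
              (G.Adj u (Q.getVert (i + 1)) ∧ G.Adj v (Q.getVert i)) then 1 else 0)) := by
          apply Finset.sum_le_sum
          intro i _
          by_cases h1 : G.Adj u (Q.getVert i) <;>
            by_cases h2 : G.Adj v (Q.getVert (i + 1)) <;> simp [h1, h2]
      _ = n + _ := by rw [Finset.sum_add_distrib, Finset.sum_const, Finset.card_range,
          smul_eq_mul, mul_one]
  -- main natural-number inequality
  have main : dOn G Q u + dOn G Q v ≤ n + MPQ G u v Q := by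
    have hu' : ∑ i ∈ Finset.range (n + 1), (if G.Adj u (Q.getVert i) then 1 else 0)
        = ∑ i ∈ Finset.range n, (if G.Adj u (Q.getVert i) then 1 else 0) +
          (if G.Adj u (Q.getVert n) then 1 else 0) := Finset.sum_range_succ _ n
    have hv' : ∑ i ∈ Finset.range (n + 1), (if G.Adj v (Q.getVert i) then 1 else 0)
        = ∑ i ∈ Finset.range n, (if G.Adj v (Q.getVert (i + 1)) then 1 else 0) +
          (if G.Adj v (Q.getVert 0) then 1 else 0) := Finset.sum_range_succ' _ n
    have hend : (if G.Adj u (Q.getVert n) then 1 else 0) +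
        (if G.Adj v (Q.getVert 0) then 1 else 0) ≤ dEnds G u v a b := by
      rw [hdEnds, hn, SimpleGraph.Walk.getVert_length, SimpleGraph.Walk.getVert_zero]
      have h1 : (if G.Adj u b then 1 else 0) ≤ (if G.Adj b u ∨ G.Adj b v then 1 else 0) := by
        by_cases h : G.Adj u b
        · simp [h, h.symm]
        · simp [h]
      have h2 : (if G.Adj v a then 1 else 0) ≤ (if G.Adj a u ∨ G.Adj a v then 1 else 0) := by
        by_cases h : G.Adj v a
        · simp [h, h.symm]
        · simp [h]
      omega
    have := hdOnu
    have := hdOnv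
    rw [hu'] at hdOnu
    rw [hv'] at hdOnv
    have := key
    unfold MPQ
    omega
  rw [hcard]
  push_cast
  omega
end

section
/- Let G be a Dirac graph on n vertices and let 𝒫 be a path cover of G in which every path has at least 2 vertices. Then for every path P ∈ 𝒫 that is good with respect to 𝒫, it holds that M(P) ≥ |𝒫|. -/
open Finset SimpleGraph

lemma getVert_injOn' {V : Type*} {G : SimpleGraph V} {a b : V} (p : G.Walk a b)
    (hp : p.IsPath) : ∀ i ≤ p.length, ∀ j ≤ p.length, p.getVert i = p.getVert j → i = j := by
  induction p with
  | nil => intro i hi j hj _; simp at hi hj; omega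
  | cons h q ih =>
    rw [SimpleGraph.Walk.cons_isPath_iff] at hp
    intro i hi j hj hij
    match i, j with
    | 0, 0 => rfl
    | 0, (j+1) =>
      exfalso
      apply hp.2
      rw [SimpleGraph.Walk.mem_support_iff_exists_getVert]
      exact ⟨j, by simpa [SimpleGraph.Walk.getVert_cons_succ] using hij.symm,
        by simpa using hj⟩
    | (i+1), 0 =>
      exfalso
      apply hp.2
      rw [SimpleGraph.Walk.mem_support_iff_exists_getVert]
      exact ⟨i, by simpa [SimpleGraph.Walk.getVert_cons_succ] using hij,
        by simpa using hi⟩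
    | (i+1), (j+1) =>
      have := ih hp.1 i (by simpa using hi) j (by simpa using hj)
        (by simpa [SimpleGraph.Walk.getVert_cons_succ] using hij)
      omega

lemma lemA {V : Type*} [DecidableEq V] (G : SimpleGraph V) [DecidableRel G.Adj]
    {a b : V} (Q : G.Walk a b) (hQ : Q.IsPath) (hab : a ≠ b) (u v : V) :
    dOn G Q u + dOn G Q v + 1 ≤ MPQ G u v Q + Q.support.toFinset.card := by
  set L := Q.length with hLdef
  have hinj := getVert_injOn' Q hQ
  have hL : 1 ≤ L := by
    by_contra h
    have h0 : L = 0 := by omega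
    have hb : Q.getVert L = b := by rw [hLdef]; exact Q.getVert_length
    rw [h0, Q.getVert_zero] at hb
    exact hab hb
  have hcard : Q.support.toFinset.card = L + 1 := by
    rw [List.toFinset_card_of_nodup hQ.support_nodup, SimpleGraph.Walk.length_support]
  set S := (Finset.range L).filter (fun i => G.Adj u (Q.getVert (i+1))) with hS
  set T := (Finset.range L).filter (fun i => G.Adj v (Q.getVert i)) with hT
  -- mergeCount ≥ |S ∩ T|
  have hmc : (S ∩ T).card ≤ mergeCount G u v Q := by
    apply Finset.card_le_card
    intro i hi
    simp only [hS, hT, Finset.mem_inter, Finset.mem_filter] at hi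
    simp only [mergeCount, Finset.mem_filter, Finset.mem_range]
    rw [Finset.mem_range] at hi
    exact ⟨by rw [← hLdef]; exact hi.1.1, Or.inr ⟨hi.1.2, hi.2.2⟩⟩
  have hST : S.card + T.card ≤ (S ∩ T).card + L := by
    have h1 := Finset.card_union_add_card_inter S T
    have h2 : (S ∪ T).card ≤ L := by
      have : S ∪ T ⊆ Finset.range L := by
        apply Finset.union_subset <;> exact Finset.filter_subset _ _
      simpa using Finset.card_le_card this
    omega
  -- dOn u ≤ S.card + (if Adj u a then 1 else 0)
  have hDu : dOn G Q u ≤ S.card + (if G.Adj u a then 1 else 0) := by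
    have hsub : Q.support.toFinset.filter (fun y => G.Adj u y) ⊆
        (S.image (fun i => Q.getVert (i+1))) ∪ (if G.Adj u a then {a} else ∅) := by
      intro y hy
      simp only [Finset.mem_filter, List.mem_toFinset] at hy
      obtain ⟨n, hn, hnL⟩ := (SimpleGraph.Walk.mem_support_iff_exists_getVert).mp hy.1
      rcases Nat.eq_zero_or_pos n with h0 | hpos
      · have : y = a := by rw [← hn, h0, Q.getVert_zero]
        subst this
        simp [hy.2]
      · apply Finset.mem_union_left
        refine Finset.mem_image.mpr ⟨n - 1, ?_, by rw [Nat.sub_add_cancel hpos, hn]⟩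
        simp only [hS, Finset.mem_filter, Finset.mem_range]
        constructor
        · omega
        · rw [Nat.sub_add_cancel hpos, hn]; exact hy.2
    calc dOn G Q u ≤ _ := Finset.card_le_card hsub
      _ ≤ (S.image (fun i => Q.getVert (i+1))).card +
          (if G.Adj u a then ({a}:Finset V) else ∅).card := Finset.card_union_le _ _
      _ ≤ S.card + (if G.Adj u a then 1 else 0) := by
          gcongr
          · exact Finset.card_image_le
          · split <;> simp
  have hDv : dOn G Q v ≤ T.card + (if G.Adj v b then 1 else 0) := by
    have hsub : Q.support.toFinset.filter (fun y => G.Adj v y) ⊆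
        (T.image (fun i => Q.getVert i)) ∪ (if G.Adj v b then {b} else ∅) := by
      intro y hy
      simp only [Finset.mem_filter, List.mem_toFinset] at hy
      obtain ⟨n, hn, hnL⟩ := (SimpleGraph.Walk.mem_support_iff_exists_getVert).mp hy.1
      rcases eq_or_lt_of_le hnL with h0 | hpos
      · have : y = b := by rw [← hn, h0, Q.getVert_length]
        subst this
        simp [hy.2]
      · apply Finset.mem_union_left
        refine Finset.mem_image.mpr ⟨n, ?_, hn⟩
        simp only [hT, Finset.mem_filter, Finset.mem_range]
        exact ⟨hpos, by rw [hn]; exact hy.2⟩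
    calc dOn G Q v ≤ _ := Finset.card_le_card hsub
      _ ≤ (T.image (fun i => Q.getVert i)).card +
          (if G.Adj v b then ({b}:Finset V) else ∅).card := Finset.card_union_le _ _
      _ ≤ T.card + (if G.Adj v b then 1 else 0) := by
          gcongr
          · exact Finset.card_image_le
          · split <;> simp
  -- dEnds ≥ [u~a] + [v~b]
  have hdE : (if G.Adj u a then 1 else 0) + (if G.Adj v b then 1 else 0) ≤
      dEnds G u v a b := by
    unfold dEnds
    by_cases h1 : G.Adj u a <;> by_cases h2 : G.Adj v b <;> simp only [h1, h2, if_true, if_false]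
    · have : ({a, b} : Finset V) ⊆ ({a, b} : Finset V).filter (fun x => G.Adj x u ∨ G.Adj x v) := by
        intro x hx
        simp only [Finset.mem_insert, Finset.mem_singleton] at hx
        rcases hx with rfl | rfl
        · exact Finset.mem_filter.mpr ⟨by simp, Or.inl h1.symm⟩
        · exact Finset.mem_filter.mpr ⟨by simp, Or.inr h2.symm⟩
      have := Finset.card_le_card this
      rwa [Finset.card_insert_of_notMem (by simpa using hab), Finset.card_singleton] at this
    · have : ({a} : Finset V) ⊆ ({a, b} : Finset V).filter (fun x => G.Adj x u ∨ G.Adj x v) := by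
        simp [Finset.singleton_subset_iff, Finset.mem_filter, h1.symm]
      simpa using Finset.card_le_card this
    · have : ({b} : Finset V) ⊆ ({a, b} : Finset V).filter (fun x => G.Adj x u ∨ G.Adj x v) := by
        simp [Finset.singleton_subset_iff, Finset.mem_filter, h2.symm]
      simpa using Finset.card_le_card this
    · omega
  unfold MPQ
  omega


/-- Let `G` be a Dirac graph (every degree is at least `n / 2`), and let `𝒫` be a path cover
of `G` (given by paths `p i`, `i : Fin k`, with endpoints `s i` and `t i`) in which every
path has at least `2` vertices.  If the path `p i₀` is good with respect to `𝒫`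
(i.e. it is sociable, or there is another path `p j` at least as long whose vertices are
not adjacent to either endpoint of `p i₀`), then `M(p i₀) = ∑_{j ≠ i₀} M(p i₀, p j) ≥ k`. -/
theorem stmt4 {V : Type*} [Fintype V] [DecidableEq V]
    (G : SimpleGraph V) [DecidableRel G.Adj]
    (hDirac : ∀ x : V, Fintype.card V ≤ 2 * G.degree x)
    (k : ℕ) (s t : Fin k → V) (p : ∀ i, G.Walk (s i) (t i))
    (hpath : ∀ i, (p i).IsPath)
    (hlen : ∀ i, 2 ≤ (p i).support.toFinset.card)
    (hdisj : ∀ i j, i ≠ j → ∀ x ∈ (p i).support, x ∉ (p j).support)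
    (hcover : ∀ x : V, ∃ i, x ∈ (p i).support)
    (i₀ : Fin k)
    (hgood :
      (dOn G (p i₀) (s i₀) + dOn G (p i₀) (t i₀) + 1 ≤ (p i₀).support.toFinset.card) ∨
      (∃ j, j ≠ i₀ ∧ (p i₀).support.toFinset.card ≤ (p j).support.toFinset.card ∧
        dOn G (p j) (s i₀) + dOn G (p j) (t i₀) = 0)) :
    k ≤ ∑ j ∈ Finset.univ.filter (fun j => j ≠ i₀), MPQ G (s i₀) (t i₀) (p j) := by
  classical
  -- endpoints of every path are distinct
  have hne : ∀ i, s i ≠ t i := by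
    intro i hst
    have h1 : (p i).support.toFinset.card = (p i).length + 1 := by
      rw [List.toFinset_card_of_nodup (hpath i).support_nodup,
        SimpleGraph.Walk.length_support]
    have h2 : (p i).getVert 0 = (p i).getVert (p i).length := by
      rw [(p i).getVert_zero, (p i).getVert_length, hst]
    have := getVert_injOn' (p i) (hpath i) 0 (Nat.zero_le _) (p i).length le_rfl h2
    have := hlen i
    omega
  -- partition identities
  have hpart : ∀ x : V, ∑ i, dOn G (p i) x = G.degree x := by
    intro x
    have hset : G.neighborFinset x =
        Finset.univ.biUnion (fun i => (p i).support.toFinset.filter (fun y => G.Adj x y)) := by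
      ext y
      simp only [SimpleGraph.mem_neighborFinset, Finset.mem_biUnion, Finset.mem_univ,
        true_and, Finset.mem_filter, List.mem_toFinset]
      constructor
      · intro h
        obtain ⟨i, hi⟩ := hcover y
        exact ⟨i, hi, h⟩
      · rintro ⟨i, _, h⟩; exact h
    have hdis : ∀ i ∈ (Finset.univ : Finset (Fin k)), ∀ j ∈ Finset.univ, i ≠ j →
        Disjoint ((p i).support.toFinset.filter (fun y => G.Adj x y))
          ((p j).support.toFinset.filter (fun y => G.Adj x y)) := by
      intro i _ j _ hij
      rw [Finset.disjoint_left]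
      intro y hy hy'
      simp only [Finset.mem_filter, List.mem_toFinset] at hy hy'
      exact hdisj i j hij y hy.1 hy'.1
    rw [← SimpleGraph.card_neighborFinset_eq_degree, hset, Finset.card_biUnion hdis]
    rfl
  have hpartV : ∑ i, (p i).support.toFinset.card = Fintype.card V := by
    have hset : (Finset.univ : Finset V) =
        Finset.univ.biUnion (fun i => (p i).support.toFinset) := by
      ext y
      simp only [Finset.mem_univ, Finset.mem_biUnion, true_and, List.mem_toFinset, true_iff]
      exact hcover y
    have hdis : ∀ i ∈ (Finset.univ : Finset (Fin k)), ∀ j ∈ Finset.univ, i ≠ j →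
        Disjoint (p i).support.toFinset (p j).support.toFinset := by
      intro i _ j _ hij
      rw [Finset.disjoint_left]
      intro y hy hy'
      simp only [List.mem_toFinset] at hy hy'
      exact hdisj i j hij y hy hy'
    rw [← Finset.card_univ, hset, Finset.card_biUnion hdis]
  -- self-bounds for path i₀
  have hself : ∀ x ∈ (p i₀).support,
      dOn G (p i₀) x + 1 ≤ (p i₀).support.toFinset.card := by
    intro x hx
    have hsub : (p i₀).support.toFinset.filter (fun y => G.Adj x y) ⊆
        (p i₀).support.toFinset.erase x := by
      intro y hy
      simp only [Finset.mem_filter] at hy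
      refine Finset.mem_erase.mpr ⟨fun h => G.irrefl (h ▸ hy.2), hy.1⟩
    have h1 := Finset.card_le_card hsub
    rw [Finset.card_erase_of_mem (List.mem_toFinset.mpr hx)] at h1
    have := hlen i₀
    unfold dOn
    omega
  have hselfu := hself (s i₀) ((p i₀).start_mem_support)
  have hselfv := hself (t i₀) ((p i₀).end_mem_support)
  -- Dirac
  have hDir : Fintype.card V ≤ G.degree (s i₀) + G.degree (t i₀) := by
    have h1 := hDirac (s i₀); have h2 := hDirac (t i₀); omega
  -- split sums off i₀
  set A := Finset.univ.filter (fun j => j ≠ i₀) with hA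
  have hAeq : A = Finset.univ.erase i₀ := by
    ext j; simp [hA, Finset.mem_erase]
  have hsplit : ∀ f : Fin k → ℕ, ∑ i, f i = f i₀ + ∑ j ∈ A, f j := by
    intro f
    rw [hAeq, Finset.add_sum_erase _ f (Finset.mem_univ i₀)]
  have hAcard : A.card + 1 = k := by
    rw [hAeq, Finset.card_erase_of_mem (Finset.mem_univ i₀)]
    have : 0 < k := i₀.pos
    simp [Finset.card_univ, this]
    omega
  have hdu := hsplit (fun i => dOn G (p i) (s i₀))
  have hdv := hsplit (fun i => dOn G (p i) (t i₀))
  have hm := hsplit (fun i => (p i).support.toFinset.card)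
  rw [hpart (s i₀)] at hdu
  rw [hpart (t i₀)] at hdv
  rw [hpartV] at hm
  rcases hgood with hsoc | ⟨j₀, hj₀ne, hmle, hzero⟩
  · -- sociable case
    have hsum : ∑ j ∈ A, (dOn G (p j) (s i₀) + dOn G (p j) (t i₀) + 1) ≤
        ∑ j ∈ A, (MPQ G (s i₀) (t i₀) (p j) + (p j).support.toFinset.card) :=
      Finset.sum_le_sum (fun j _ => lemA G (p j) (hpath j) (hne j) (s i₀) (t i₀))
    simp only [Finset.sum_add_distrib, Finset.sum_const, smul_eq_mul, mul_one] at hsum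
    omega
  · -- case with a far path j₀
    have hj₀A : j₀ ∈ A := by simp [hA, hj₀ne]
    set A' := A.erase j₀ with hA'
    have hsplit' : ∀ f : Fin k → ℕ, ∑ j ∈ A, f j = f j₀ + ∑ j ∈ A', f j := by
      intro f
      rw [hA', Finset.add_sum_erase _ f hj₀A]
    have hA'card : A'.card + 1 = A.card := by
      rw [hA', Finset.card_erase_of_mem hj₀A]
      have : 0 < A.card := Finset.card_pos.mpr ⟨j₀, hj₀A⟩
      omega
    have hsum : ∑ j ∈ A', (dOn G (p j) (s i₀) + dOn G (p j) (t i₀) + 1) ≤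
        ∑ j ∈ A', (MPQ G (s i₀) (t i₀) (p j) + (p j).support.toFinset.card) :=
      Finset.sum_le_sum (fun j _ => lemA G (p j) (hpath j) (hne j) (s i₀) (t i₀))
    simp only [Finset.sum_add_distrib, Finset.sum_const, smul_eq_mul, mul_one] at hsum
    have hdu' := hsplit' (fun i => dOn G (p i) (s i₀))
    have hdv' := hsplit' (fun i => dOn G (p i) (t i₀))
    have hm' := hsplit' (fun i => (p i).support.toFinset.card)
    have hM' := hsplit' (fun i => MPQ G (s i₀) (t i₀) (p i))
    omega
end
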